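/- In the CROP setup, for every β ≥ 0 and every (s,a): |Q̂^π_β(s,a) − Q^π(s,a) + β·[S^π_f (μ/π̄)](s,a)| ≤ [S^π_f ψ](s,a), where (μ/π̄)(s,a) = μ/π̄ s a. Equivalently, Q^π − β·S^π_f(μ/π̄) − S^π_f ψ ≤ Q̂^π_β ≤ Q^π − β·S^π_f(μ/π̄) + S^π_f ψ pointwise. -/

import Mathlib

open Finset

section Defs

variable {S A : Type*} [Fintype S] [Fintype A]

/-- A transition kernel: nonnegative entries, each row sums to one. -/
def IsKernel (T : S → A → S → ℝ) : Prop :=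
  (∀ s a s', 0 ≤ T s a s') ∧ ∀ s a, ∑ s', T s a s' = 1

/-- A policy: nonnegative probabilities summing to one at each state. -/
def IsPolicy (π : S → A → ℝ) : Prop :=
  (∀ s a, 0 ≤ π s a) ∧ ∀ s, ∑ a, π s a = 1

/-- The state–action transition matrix `T^π`. -/
def saMatrix (T : S → A → S → ℝ) (π : S → A → ℝ) :
    Matrix (S × A) (S × A) ℝ :=
  Matrix.of fun p q => T p.1 p.2 q.1 * π q.1 q.2

/-- The Bellman operator `B^{T,r,π} Q = r + γ · T^π Q`. -/
def bellman (T : S → A → S → ℝ) (r : S × A → ℝ) (π : S → A → ℝ) (γ : ℝ)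
    (Q : S × A → ℝ) : S × A → ℝ :=
  fun p => r p + γ * ∑ q, saMatrix T π p q * Q q

/-- The operator `S^π = (I − γ·T^π)⁻¹` acting on functions `S × A → ℝ`. -/
noncomputable def Sop [DecidableEq S] [DecidableEq A]
    (T : S → A → S → ℝ) (π : S → A → ℝ) (γ : ℝ) (u : S × A → ℝ) :
    S × A → ℝ :=
  ((1 : Matrix (S × A) (S × A) ℝ) - γ • saMatrix T π)⁻¹.mulVec u

end Defs

section Aux
open Matrix

variable {n : Type*} [Fintype n] [DecidableEq n] [Nonempty n]

lemma onesub_mulVec_apply (M : Matrix n n ℝ) (y : n → ℝ) (p : n) :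
    ((1 - M) *ᵥ y) p = y p - ∑ q, M p q * y q := by
  simp only [Matrix.mulVec, dotProduct, Matrix.sub_apply, Matrix.one_apply, sub_mul,
    Finset.sum_sub_distrib, ite_mul, one_mul, zero_mul, Finset.sum_ite_eq,
    Finset.mem_univ, if_true]

lemma maxprin (M : Matrix n n ℝ) (γ : ℝ) (hγ1 : γ < 1)
    (hM : ∀ p q, 0 ≤ M p q) (hrow : ∀ p, ∑ q, M p q = γ)
    (x w : n → ℝ)
    (h : ∀ p, |((1 - M) *ᵥ x) p| ≤ ((1 - M) *ᵥ w) p) :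
    ∀ p, |x p| ≤ w p := by
  obtain ⟨p₀, -, hp₀⟩ := Finset.exists_max_image Finset.univ
    (fun p => |x p| - w p) Finset.univ_nonempty
  set c := |x p₀| - w p₀ with hc
  have key : c ≤ γ * c := by
    have h1 : x p₀ = ((1 - M) *ᵥ x) p₀ + ∑ q, M p₀ q * x q := by
      rw [onesub_mulVec_apply]; ring
    have h2 : |x p₀| ≤ |((1 - M) *ᵥ x) p₀| + ∑ q, M p₀ q * |x q| := by
      rw [h1]
      refine (abs_add_le _ _).trans ?_
      gcongr
      refine (Finset.abs_sum_le_sum_abs _ _).trans (le_of_eq ?_)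
      exact Finset.sum_congr rfl fun q _ => by
        rw [abs_mul, abs_of_nonneg (hM p₀ q)]
    have h3 : ∑ q, M p₀ q * |x q| ≤ ∑ q, M p₀ q * (w q + c) := by
      gcongr with q hq
      · exact hM p₀ q
      · have := hp₀ q (Finset.mem_univ q); simp only [hc] at this ⊢; linarith
    have h4 : ∑ q, M p₀ q * (w q + c) = (∑ q, M p₀ q * w q) + γ * c := by
      simp only [mul_add]
      rw [Finset.sum_add_distrib, ← Finset.sum_mul, hrow]
    have h5 : |((1 - M) *ᵥ x) p₀| ≤ w p₀ - ∑ q, M p₀ q * w q := by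
      have := h p₀; rwa [onesub_mulVec_apply M w p₀] at this
    linarith [h2, h3, h4, h5]
  have hc0 : c ≤ 0 := by nlinarith
  intro p
  have := hp₀ p (Finset.mem_univ p)
  linarith

lemma onesub_mulVec_inv (M : Matrix n n ℝ) (γ : ℝ) (hγ1 : γ < 1)
    (hM : ∀ p q, 0 ≤ M p q) (hrow : ∀ p, ∑ q, M p q = γ) (u : n → ℝ) :
    (1 - M) *ᵥ ((1 - M)⁻¹ *ᵥ u) = u := by
  have hinj : Function.Injective ((1 - M).mulVec) := by
    intro x y hxy
    have h0 : ∀ p, |((1 - M) *ᵥ (x - y)) p| ≤ ((1 - M) *ᵥ (0 : n → ℝ)) p := by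
      intro p
      simp only [Matrix.mulVec_sub, Matrix.mulVec_zero]
      rw [show (1 - M) *ᵥ x - (1 - M) *ᵥ y = 0 by rw [hxy]; simp]
      simp
    have hb := maxprin M γ hγ1 hM hrow (x - y) 0 h0
    funext p
    have := hb p
    simp only [Pi.sub_apply, Pi.zero_apply] at this
    have := abs_nonpos_iff.mp this
    linarith [sub_eq_zero.mp this]
  have hu : IsUnit (1 - M) := Matrix.mulVec_injective_iff_isUnit.mp hinj
  rw [Matrix.mulVec_mulVec,
    Matrix.mul_nonsing_inv _ ((Matrix.isUnit_iff_isUnit_det _).mp hu),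
    Matrix.one_mulVec]

end Aux

open Matrix in
/-- Fixed-point sandwich: the CROP Q-function `Q̂^π_β` satisfies
`|Q̂^π_β − Q^π + β·S^π_f(μ/π̄)| ≤ S^π_f ψ` pointwise. -/
theorem stmt_8 {S A : Type*} [Fintype S] [Fintype A] [Nonempty S] [Nonempty A]
    [DecidableEq S] [DecidableEq A]
    (T : S → A → S → ℝ) (hT : IsKernel T)
    (R : S × A → ℝ) (Rmax : ℝ) (hR : ∀ p : S × A, |R p| ≤ Rmax)
    (πbar : S → A → ℝ) (hπbar : IsPolicy πbar)
    (hπbarpos : ∀ s a, 0 < πbar s a)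
    (μ : ℝ) (hμ : μ = (Fintype.card A : ℝ)⁻¹)
    (π : S → A → ℝ) (hπ : IsPolicy π)
    (γ : ℝ) (hγ0 : 0 ≤ γ) (hγ1 : γ < 1)
    (N : S × A → ℝ) (hN : ∀ p : S × A, 1 ≤ N p)
    (Cr CT εr εT : ℝ)
    (hCr : 0 ≤ Cr) (hCT : 0 ≤ CT) (hεr : 0 ≤ εr) (hεT : 0 ≤ εT)
    (f : ℝ) (hf0 : 0 ≤ f) (hf1 : f ≤ 1)
    (Tbar That : S → A → S → ℝ) (hTbar : IsKernel Tbar) (hThat : IsKernel That)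
    (hTbarT : ∀ s a, ∑ s', |Tbar s a s' - T s a s'| ≤ CT / Real.sqrt (N (s, a)))
    (hThatTbar : ∀ s a, ∑ s', |That s a s' - Tbar s a s'| ≤ εT)
    (rbar rhat : ℝ → S × A → ℝ)
    (hrbar : ∀ β, 0 ≤ β → ∀ p : S × A,
      |rbar β p - (R p - β * μ / πbar p.1 p.2)| ≤ Cr / Real.sqrt (N p))
    (hrhat : ∀ β, 0 ≤ β → ∀ p : S × A, |rhat β p - rbar β p| ≤ εr)
    (Tf : S → A → S → ℝ)
    (hTf : ∀ s a s', Tf s a s' = (1 - f) * Tbar s a s' + f * That s a s')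
    (ψ : S × A → ℝ)
    (hψ : ∀ p : S × A, ψ p = Cr / Real.sqrt (N p) + εr
      + γ * (CT / Real.sqrt (N p) + f * εT) * (Rmax / (1 - γ)))
    (Qpi : S × A → ℝ) (hQpi : bellman T R π γ Qpi = Qpi)
    (Qhat : ℝ → S × A → ℝ)
    (hQhat : ∀ β, 0 ≤ β → bellman Tf (rhat β) π γ (Qhat β) = Qhat β) :
    ∀ β, 0 ≤ β → ∀ p : S × A,
      (|Qhat β p - Qpi p
          + β * Sop Tf π γ (fun q => μ / πbar q.1 q.2) p|
        ≤ Sop Tf π γ ψ p) ∧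
      (Qpi p - β * Sop Tf π γ (fun q => μ / πbar q.1 q.2) p - Sop Tf π γ ψ p
        ≤ Qhat β p) ∧
      (Qhat β p
        ≤ Qpi p - β * Sop Tf π γ (fun q => μ / πbar q.1 q.2) p
          + Sop Tf π γ ψ p) := by
  intro β hβ
  have h1γ : (0:ℝ) < 1 - γ := by linarith
  have hRmax0 : 0 ≤ Rmax := le_trans (abs_nonneg _) (hR (Classical.arbitrary _))
  set K := Rmax / (1 - γ) with hKdef
  have hK0 : 0 ≤ K := div_nonneg hRmax0 h1γ.le
  -- Tf is a kernel
  have hTfK : IsKernel Tf := by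
    constructor
    · intro s a s'; rw [hTf]
      have h1 := hTbar.1 s a s'; have h2 := hThat.1 s a s'
      nlinarith
    · intro s a
      simp only [hTf]
      rw [Finset.sum_add_distrib, ← Finset.mul_sum, ← Finset.mul_sum,
        hTbar.2, hThat.2]
      ring
  -- entries and row sums of γ • saMatrix T' π for a kernel T'
  have hMnn : ∀ (T' : S → A → S → ℝ), IsKernel T' →
      ∀ p q : S × A, 0 ≤ (γ • saMatrix T' π) p q := by
    intro T' hT' p q
    simp only [Matrix.smul_apply, smul_eq_mul, saMatrix, Matrix.of_apply]
    exact mul_nonneg hγ0 (mul_nonneg (hT'.1 _ _ _) (hπ.1 _ _))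
  have hrowgen : ∀ (T' : S → A → S → ℝ), IsKernel T' →
      ∀ p : S × A, ∑ q, (γ • saMatrix T' π) p q = γ := by
    intro T' hT' p
    simp only [Matrix.smul_apply, smul_eq_mul, saMatrix, Matrix.of_apply]
    rw [← Finset.mul_sum, Fintype.sum_prod_type]
    have hin : ∀ s' : S, ∑ a', T' p.1 p.2 s' * π s' a' = T' p.1 p.2 s' := by
      intro s'; rw [← Finset.mul_sum, hπ.2, mul_one]
    simp only [hin, hT'.2, mul_one]
  -- bound on |Qpi|
  have hQb : ∀ q : S × A, |Qpi q| ≤ K := by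
    refine maxprin (γ • saMatrix T π) γ hγ1 (hMnn T hT) (hrowgen T hT) Qpi
      (fun _ => K) ?_
    intro p
    have hfix := congrFun hQpi p
    simp only [bellman] at hfix
    have hx : ((1 - γ • saMatrix T π) *ᵥ Qpi) p = R p := by
      rw [onesub_mulVec_apply]
      have : ∑ q, (γ • saMatrix T π) p q * Qpi q
          = γ * ∑ q, saMatrix T π p q * Qpi q := by
        rw [Finset.mul_sum]
        exact Finset.sum_congr rfl fun q _ => by
          simp [Matrix.smul_apply, smul_eq_mul, mul_assoc]
      rw [this]; linarith
    have hw : ((1 - γ • saMatrix T π) *ᵥ (fun _ => K)) p = Rmax := by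
      rw [onesub_mulVec_apply]
      rw [← Finset.sum_mul, hrowgen T hT]
      field_simp [hKdef]
      rw [hKdef, div_mul_cancel₀ _ h1γ.ne']
    rw [hx, hw]; exact hR p
  -- the matrix M
  set M : Matrix (S × A) (S × A) ℝ := γ • saMatrix Tf π with hMdef
  have hcancel : ∀ u : S × A → ℝ, (1 - M) *ᵥ (Sop Tf π γ u) = u := by
    intro u
    exact onesub_mulVec_inv M γ hγ1 (hMnn Tf hTfK) (hrowgen Tf hTfK) u
  -- key computation of (1-M) *ᵥ (Qhat - Qpi)
  have he : ∀ p : S × A, ((1 - M) *ᵥ (fun q => Qhat β q - Qpi q)) p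
      = rhat β p - R p
        + γ * ∑ q, (saMatrix Tf π p q - saMatrix T π p q) * Qpi q := by
    intro p
    have hQh := congrFun (hQhat β hβ) p
    have hQp := congrFun hQpi p
    simp only [bellman] at hQh hQp
    rw [onesub_mulVec_apply]
    have hs1 : ∑ q, M p q * (Qhat β q - Qpi q)
        = γ * (∑ q, saMatrix Tf π p q * Qhat β q)
          - γ * (∑ q, saMatrix Tf π p q * Qpi q) := by
      simp only [hMdef, Matrix.smul_apply, smul_eq_mul, mul_sub, mul_assoc]
      rw [Finset.sum_sub_distrib, ← Finset.mul_sum, ← Finset.mul_sum]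
    have hs2 : ∑ q, (saMatrix Tf π p q - saMatrix T π p q) * Qpi q
        = (∑ q, saMatrix Tf π p q * Qpi q)
          - ∑ q, saMatrix T π p q * Qpi q := by
      simp only [sub_mul]
      rw [Finset.sum_sub_distrib]
    rw [hs1, hs2]; linarith
  -- bound the perturbation pointwise by ψ
  have hbound : ∀ p : S × A,
      |((1 - M) *ᵥ (fun q => Qhat β q - Qpi q)) p + β * (μ / πbar p.1 p.2)|
        ≤ ψ p := by
    intro p
    rw [he p]
    have hterm1 : |rhat β p - (R p - β * μ / πbar p.1 p.2)|
        ≤ εr + Cr / Real.sqrt (N p) := by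
      have h1 := hrhat β hβ p
      have h2 := hrbar β hβ p
      calc |rhat β p - (R p - β * μ / πbar p.1 p.2)|
          = |(rhat β p - rbar β p) + (rbar β p - (R p - β * μ / πbar p.1 p.2))| := by
            ring_nf
        _ ≤ |rhat β p - rbar β p| + |rbar β p - (R p - β * μ / πbar p.1 p.2)| :=
            abs_add_le _ _
        _ ≤ εr + Cr / Real.sqrt (N p) := add_le_add h1 h2
    -- bound the ΔT sum
    have hΔT : ∑ s', |Tf p.1 p.2 s' - T p.1 p.2 s'|
        ≤ CT / Real.sqrt (N p) + f * εT := by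
      have hstep : ∀ s', |Tf p.1 p.2 s' - T p.1 p.2 s'|
          ≤ |Tbar p.1 p.2 s' - T p.1 p.2 s'|
            + f * |That p.1 p.2 s' - Tbar p.1 p.2 s'| := by
        intro s'
        have : Tf p.1 p.2 s' - T p.1 p.2 s'
            = (Tbar p.1 p.2 s' - T p.1 p.2 s')
              + f * (That p.1 p.2 s' - Tbar p.1 p.2 s') := by
          rw [hTf]; ring
        rw [this]
        refine (abs_add_le _ _).trans ?_
        rw [abs_mul, abs_of_nonneg hf0]
      calc ∑ s', |Tf p.1 p.2 s' - T p.1 p.2 s'|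
          ≤ ∑ s', (|Tbar p.1 p.2 s' - T p.1 p.2 s'|
              + f * |That p.1 p.2 s' - Tbar p.1 p.2 s'|) :=
            Finset.sum_le_sum fun s' _ => hstep s'
        _ = (∑ s', |Tbar p.1 p.2 s' - T p.1 p.2 s'|)
              + f * ∑ s', |That p.1 p.2 s' - Tbar p.1 p.2 s'| := by
            rw [Finset.sum_add_distrib, Finset.mul_sum]
        _ ≤ CT / Real.sqrt (N p) + f * εT := by
            have h1 := hTbarT p.1 p.2
            have h2 := hThatTbar p.1 p.2
            have hNp : N (p.1, p.2) = N p := by rw [Prod.mk.eta]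
            rw [hNp] at h1
            have := mul_le_mul_of_nonneg_left h2 hf0
            linarith
    have hterm2 : |∑ q, (saMatrix Tf π p q - saMatrix T π p q) * Qpi q|
        ≤ (CT / Real.sqrt (N p) + f * εT) * K := by
      have hsum : ∑ q, (saMatrix Tf π p q - saMatrix T π p q) * Qpi q
          = ∑ s', (Tf p.1 p.2 s' - T p.1 p.2 s')
              * ∑ a', π s' a' * Qpi (s', a') := by
        rw [Fintype.sum_prod_type]
        refine Finset.sum_congr rfl fun s' _ => ?_
        rw [Finset.mul_sum]
        refine Finset.sum_congr rfl fun a' _ => ?_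
        simp only [saMatrix, Matrix.of_apply]
        ring
      have hinner : ∀ s' : S, |∑ a', π s' a' * Qpi (s', a')| ≤ K := by
        intro s'
        refine (Finset.abs_sum_le_sum_abs _ _).trans ?_
        calc ∑ a', |π s' a' * Qpi (s', a')|
            ≤ ∑ a', π s' a' * K := by
              refine Finset.sum_le_sum fun a' _ => ?_
              rw [abs_mul, abs_of_nonneg (hπ.1 _ _)]
              exact mul_le_mul_of_nonneg_left (hQb _) (hπ.1 _ _)
          _ = K := by rw [← Finset.sum_mul, hπ.2, one_mul]
      rw [hsum]
      refine (Finset.abs_sum_le_sum_abs _ _).trans ?_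
      calc ∑ s', |(Tf p.1 p.2 s' - T p.1 p.2 s')
              * ∑ a', π s' a' * Qpi (s', a')|
          ≤ ∑ s', |Tf p.1 p.2 s' - T p.1 p.2 s'| * K := by
            refine Finset.sum_le_sum fun s' _ => ?_
            rw [abs_mul]
            exact mul_le_mul_of_nonneg_left (hinner s') (abs_nonneg _)
        _ = (∑ s', |Tf p.1 p.2 s' - T p.1 p.2 s'|) * K := by
            rw [Finset.sum_mul]
        _ ≤ (CT / Real.sqrt (N p) + f * εT) * K :=
            mul_le_mul_of_nonneg_right hΔT hK0
    have hrw : rhat β p - R p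
        + γ * ∑ q, (saMatrix Tf π p q - saMatrix T π p q) * Qpi q
        + β * (μ / πbar p.1 p.2)
        = (rhat β p - (R p - β * μ / πbar p.1 p.2))
          + γ * ∑ q, (saMatrix Tf π p q - saMatrix T π p q) * Qpi q := by
      ring
    rw [hrw, hψ p]
    refine (abs_add_le _ _).trans ?_
    have : |γ * ∑ q, (saMatrix Tf π p q - saMatrix T π p q) * Qpi q|
        ≤ γ * ((CT / Real.sqrt (N p) + f * εT) * K) := by
      rw [abs_mul, abs_of_nonneg hγ0]
      exact mul_le_mul_of_nonneg_left hterm2 hγ0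
    simp only [hKdef] at this ⊢
    linarith
  -- apply the maximum principle
  have hmain : ∀ p : S × A,
      |Qhat β p - Qpi p + β * Sop Tf π γ (fun q => μ / πbar q.1 q.2) p|
        ≤ Sop Tf π γ ψ p := by
    have hmv : (1 - M) *ᵥ ((fun q => Qhat β q - Qpi q)
          + β • Sop Tf π γ (fun q => μ / πbar q.1 q.2))
        = ((1 - M) *ᵥ fun q => Qhat β q - Qpi q)
          + β • (fun q : S × A => μ / πbar q.1 q.2) := by
      rw [Matrix.mulVec_add, Matrix.mulVec_smul, hcancel]
    have h := maxprin M γ hγ1 (hMnn Tf hTfK) (hrowgen Tf hTfK)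
      ((fun q => Qhat β q - Qpi q)
        + β • Sop Tf π γ (fun q => μ / πbar q.1 q.2))
      (Sop Tf π γ ψ) ?_
    · intro p
      have := h p
      simp only [Pi.add_apply, Pi.smul_apply, smul_eq_mul] at this
      exact this
    · intro p
      rw [hmv, hcancel]
      simp only [Pi.add_apply, Pi.smul_apply, smul_eq_mul]
      exact hbound p
  intro p
  have h1 := hmain p
  have h2 := abs_le.mp h1
  refine ⟨h1, by linarith [h2.1], by linarith [h2.2]⟩
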